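/- Let α and β be positive real numbers, and let G be a finite group acting faithfully and quasiprimitively on a finite set Ω (that is, G is transitive on Ω and every nontrivial normal subgroup of G is transitive on Ω). Suppose that there exists a nontrivial element x ∈ G whose support has size at most (1−α)|Ω|, and that the point stabilizer G_ω has order at most β for every ω ∈ Ω. Then |G| ≤ ⌈β/α⌉!. -/

import Mathlib

/-- Let α and β be positive real numbers, and let G be a finite group acting
faithfully and quasiprimitively on a finite set Ω (that is, G is transitive on Ω and every
nontrivial normal subgroup of G is transitive on Ω). Suppose that there exists a nontrivial
element x ∈ G whose support has size at most (1−α)|Ω|, and that the point stabilizer G_ω has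
order at most β for every ω ∈ Ω. Then |G| ≤ ⌈β/α⌉!. -/
theorem stmt_0 {Ω : Type*} [Fintype Ω] (α β : ℝ) (hα : 0 < α) (hβ : 0 < β)
    (G : Subgroup (Equiv.Perm Ω))
    (htrans : MulAction.IsPretransitive G Ω)
    (hquasi : ∀ N : Subgroup G, N.Normal → N ≠ ⊥ → MulAction.IsPretransitive N Ω)
    (x : G) (hx : x ≠ 1)
    (hsupp : (Nat.card {ω : Ω // (x : Equiv.Perm Ω) ω ≠ ω} : ℝ) ≤ (1 - α) * Fintype.card Ω)
    (hstab : ∀ ω : Ω, (Nat.card (MulAction.stabilizer G ω) : ℝ) ≤ β) :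
    Nat.card G ≤ Nat.factorial ⌈β / α⌉₊ := by
  classical
  rcases isEmpty_or_nonempty Ω with hE | hNE
  · exact absurd (Subtype.ext (Equiv.ext fun ω => hE.elim ω)) hx
  set n := Fintype.card Ω with hn
  have hn0 : 0 < n := Fintype.card_pos
  -- fixed point set of x
  set F : Finset Ω := Finset.univ.filter (fun ω => (x : Equiv.Perm Ω) ω = ω) with hF
  have hsupp' : Nat.card {ω : Ω // (x : Equiv.Perm Ω) ω ≠ ω}
      = (Finset.univ.filter (fun ω => ¬ (x : Equiv.Perm Ω) ω = ω)).card := by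
    rw [Nat.card_eq_fintype_card, Fintype.card_subtype]
  have hcompl : F.card + (Finset.univ.filter (fun ω => ¬ (x : Equiv.Perm Ω) ω = ω)).card = n := by
    rw [hF, Finset.card_filter_add_card_filter_not, Finset.card_univ]
  have hfR : α * n ≤ (F.card : ℝ) := by
    have h1 : (F.card : ℝ) + (Nat.card {ω : Ω // (x : Equiv.Perm Ω) ω ≠ ω} : ℝ) = n := by
      rw [hsupp']; exact_mod_cast hcompl
    nlinarith
  -- the conjugacy class of x, as a finset of permutations
  set S : Finset (Equiv.Perm Ω) :=
    Finset.image (fun g : G => ((g * x * g⁻¹ : G) : Equiv.Perm Ω)) Finset.univ with hS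
  have hmemS : ∀ p : Equiv.Perm Ω, p ∈ S ↔ ∃ g : G, ((g * x * g⁻¹ : G) : Equiv.Perm Ω) = p := by
    intro p
    simp [hS, Finset.mem_image]
  -- each conjugate of x fixes exactly F.card points
  have hfixconj : ∀ p ∈ S, (Finset.univ.filter (fun ω => p ω = ω)).card = F.card := by
    intro p hp
    obtain ⟨g, rfl⟩ := (hmemS p).mp hp
    apply Finset.card_bij' (fun ω _ => ((g⁻¹ : G) : Equiv.Perm Ω) ω) (fun ω _ => (g : Equiv.Perm Ω) ω)
    · intro ω hω
      simp only [hF, Finset.mem_filter, Finset.mem_univ, true_and] at hω ⊢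
      simp only [Finset.mem_filter, Finset.mem_univ, true_and,
        Subgroup.coe_mul, Subgroup.coe_inv, Equiv.Perm.mul_apply] at hω ⊢
      have := congrArg ((g⁻¹ : G) : Equiv.Perm Ω) hω
      simpa using this
    · intro ω hω
      simp only [hF, Finset.mem_filter, Finset.mem_univ, true_and] at hω ⊢
      simp only [Finset.mem_filter, Finset.mem_univ, true_and,
        Subgroup.coe_mul, Subgroup.coe_inv, Equiv.Perm.mul_apply] at hω ⊢
      simp [hω]
    · intro ω _; simp
    · intro ω _; simp
  -- double counting: S.card * F.card ≤ n * β
  have hcount : ∀ ω : Ω, ((S.filter (fun p => p ω = ω)).card : ℝ) ≤ β := by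
    intro ω
    have hinj : (S.filter (fun p => p ω = ω)).card ≤ Nat.card (MulAction.stabilizer G ω) := by
      have : Fintype (MulAction.stabilizer G ω) := Fintype.ofFinite _
      rw [Nat.card_eq_fintype_card, ← Finset.card_univ]
      apply Finset.card_le_card_of_injOn
        (fun p => if h : p ∈ G ∧ p ω = ω then
          (⟨⟨p, h.1⟩, by
            rw [MulAction.mem_stabilizer_iff]
            show (⟨p, h.1⟩ : G) • ω = ω
            rw [Subgroup.smul_def]
            exact h.2⟩ : MulAction.stabilizer G ω) else 1)
      · intro p _; exact Finset.mem_univ _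
      · intro p hp q hq hpq
        have hp' : p ∈ G ∧ p ω = ω := by
          obtain ⟨hp1, hp2⟩ := Finset.mem_filter.mp hp
          obtain ⟨g, rfl⟩ := (hmemS p).mp hp1
          exact ⟨SetLike.coe_mem _, hp2⟩
        have hq' : q ∈ G ∧ q ω = ω := by
          obtain ⟨hq1, hq2⟩ := Finset.mem_filter.mp hq
          obtain ⟨g, rfl⟩ := (hmemS q).mp hq1
          exact ⟨SetLike.coe_mem _, hq2⟩
        simp only [dif_pos hp', dif_pos hq'] at hpq
        have := congrArg (fun z : MulAction.stabilizer G ω => ((z : G) : Equiv.Perm Ω)) hpq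
        simpa using this
    calc ((S.filter (fun p => p ω = ω)).card : ℝ)
        ≤ (Nat.card (MulAction.stabilizer G ω) : ℝ) := by exact_mod_cast hinj
      _ ≤ β := hstab ω
  have hdouble : S.card * F.card = ∑ ω : Ω, (S.filter (fun p => p ω = ω)).card := by
    calc S.card * F.card = ∑ p ∈ S, (Finset.univ.filter (fun ω => p ω = ω)).card := by
          rw [Finset.sum_congr rfl hfixconj, Finset.sum_const, smul_eq_mul]
      _ = ∑ p ∈ S, ∑ ω : Ω, if p ω = ω then 1 else 0 := by
          apply Finset.sum_congr rfl; intro p _; rw [Finset.card_filter]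
      _ = ∑ ω : Ω, ∑ p ∈ S, if p ω = ω then 1 else 0 := Finset.sum_comm
      _ = ∑ ω : Ω, (S.filter (fun p => p ω = ω)).card := by
          apply Finset.sum_congr rfl; intro ω _; rw [Finset.card_filter]
  have hSR : (S.card : ℝ) ≤ β / α := by
    have h2 : ((S.card * F.card : ℕ) : ℝ) ≤ n * β := by
      rw [hdouble]
      push_cast
      calc ∑ ω : Ω, ((S.filter (fun p => p ω = ω)).card : ℝ)
          ≤ ∑ _ω : Ω, β := Finset.sum_le_sum (fun ω _ => hcount ω)
        _ = n * β := by rw [Finset.sum_const, Finset.card_univ, nsmul_eq_mul]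
    push_cast at h2
    rw [le_div_iff₀ hα]
    have hnR : (0 : ℝ) < n := by exact_mod_cast hn0
    nlinarith [mul_le_mul_of_nonneg_left hfR (by positivity : (0:ℝ) ≤ (S.card : ℝ))]
  have hk : S.card ≤ ⌈β / α⌉₊ := by
    calc S.card = ⌈(S.card : ℝ)⌉₊ := (Nat.ceil_natCast _).symm
      _ ≤ ⌈β / α⌉₊ := Nat.ceil_mono hSR
  -- the centralizer of the conjugacy class is trivial
  set T : Set G := {h : G | ∃ g : G, g * x * g⁻¹ = h} with hT
  set K : Subgroup G := Subgroup.centralizer T with hK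
  have hKnormal : K.Normal := by
    constructor
    intro h hh g
    rw [hK, Subgroup.mem_centralizer_iff] at hh ⊢
    rintro t ⟨c, rfl⟩
    have h1 : (g⁻¹ * c) * x * (g⁻¹ * c)⁻¹ ∈ T := ⟨g⁻¹ * c, rfl⟩
    have h2 := hh _ h1
    have := congrArg (fun z => g * z * g⁻¹) h2
    simp only [mul_inv_rev, inv_inv] at this ⊢
    group at this ⊢
    convert this using 1 <;> group
  have hKbot : K = ⊥ := by
    by_contra hKne
    have htr := hquasi K hKnormal hKne
    have hFne : F.Nonempty := by
      rw [← Finset.card_pos]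
      by_contra hcon
      push_neg at hcon
      have h0 : F.card = 0 := Nat.le_zero.mp hcon
      rw [h0] at hfR
      have hnR : (0 : ℝ) < n := by exact_mod_cast hn0
      simp at hfR
      nlinarith
    obtain ⟨ω₀, hω₀⟩ := hFne
    rw [hF, Finset.mem_filter] at hω₀
    have hxall : ∀ ω : Ω, (x : Equiv.Perm Ω) ω = ω := by
      intro ω
      obtain ⟨k, hk'⟩ := htr.exists_smul_eq ω₀ ω
      have hkK : (k : G) ∈ Subgroup.centralizer T := k.2
      rw [Subgroup.mem_centralizer_iff] at hkK
      have hxT : x ∈ T := ⟨1, by group⟩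
      have hcomm : x * (k : G) = (k : G) * x := hkK x hxT
      have hcomm' : (x : Equiv.Perm Ω) * ((k : G) : Equiv.Perm Ω)
          = ((k : G) : Equiv.Perm Ω) * (x : Equiv.Perm Ω) := by
        exact_mod_cast congrArg (fun z : G => (z : Equiv.Perm Ω)) hcomm
      have hk'' : ((k : G) : Equiv.Perm Ω) ω₀ = ω := by
        rw [← hk', Subgroup.smul_def, Subgroup.smul_def]
        rfl
      calc (x : Equiv.Perm Ω) ω = (x : Equiv.Perm Ω) (((k : G) : Equiv.Perm Ω) ω₀) := by rw [hk'']
        _ = ((x : Equiv.Perm Ω) * ((k : G) : Equiv.Perm Ω)) ω₀ := rfl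
        _ = (((k : G) : Equiv.Perm Ω) * (x : Equiv.Perm Ω)) ω₀ := by rw [hcomm']
        _ = ((k : G) : Equiv.Perm Ω) ((x : Equiv.Perm Ω) ω₀) := rfl
        _ = ((k : G) : Equiv.Perm Ω) ω₀ := by rw [hω₀.2]
        _ = ω := hk''
    exact hx (Subtype.ext (Equiv.ext hxall))
  -- conjugation action of G on S
  have hmem1 : ∀ (g : G) (p : Equiv.Perm Ω), p ∈ S →
      (g : Equiv.Perm Ω) * p * (g : Equiv.Perm Ω)⁻¹ ∈ S := by
    intro g p hp
    obtain ⟨c, rfl⟩ := (hmemS p).mp hp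
    rw [hmemS]
    refine ⟨g * c, ?_⟩
    push_cast [Subgroup.coe_mul, Subgroup.coe_inv]
    group
  have hmem2 : ∀ (g : G) (p : Equiv.Perm Ω), p ∈ S →
      (g : Equiv.Perm Ω)⁻¹ * p * (g : Equiv.Perm Ω) ∈ S := by
    intro g p hp
    have := hmem1 g⁻¹ p hp
    simpa using this
  let act : G → Equiv.Perm {p : Equiv.Perm Ω // p ∈ S} := fun g =>
    { toFun := fun p => ⟨(g : Equiv.Perm Ω) * p * (g : Equiv.Perm Ω)⁻¹, hmem1 g p p.2⟩
      invFun := fun p => ⟨(g : Equiv.Perm Ω)⁻¹ * p * (g : Equiv.Perm Ω), hmem2 g p p.2⟩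
      left_inv := by intro p; ext : 1; simp [mul_assoc]
      right_inv := by intro p; ext : 1; simp [mul_assoc] }
  let φ : G →* Equiv.Perm {p : Equiv.Perm Ω // p ∈ S} :=
    { toFun := act
      map_one' := by
        ext p
        simp [act]
      map_mul' := by
        intro a b
        ext p
        simp [act, mul_assoc] }
  have hφinj : Function.Injective φ := by
    rw [injective_iff_map_eq_one]
    intro g hg
    have hgK : g ∈ K := by
      rw [hK, Subgroup.mem_centralizer_iff]
      rintro t ⟨c, rfl⟩
      have hpS : ((c * x * c⁻¹ : G) : Equiv.Perm Ω) ∈ S := (hmemS _).mpr ⟨c, rfl⟩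
      have h3 := congrArg (fun e : Equiv.Perm {p : Equiv.Perm Ω // p ∈ S} =>
        ((e ⟨_, hpS⟩ : {p : Equiv.Perm Ω // p ∈ S}) : Equiv.Perm Ω)) hg
      simp only [φ, act, MonoidHom.coe_mk, OneHom.coe_mk, Equiv.coe_fn_mk,
        Equiv.Perm.coe_one, id_eq] at h3
      -- h3 : ↑g * ↑(c*x*c⁻¹) * ↑g⁻¹ = ↑(c*x*c⁻¹)
      apply Subtype.ext
      push_cast [Subgroup.coe_mul, Subgroup.coe_inv] at h3 ⊢
      have := congrArg (fun z => z * (g : Equiv.Perm Ω)) h3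
      simpa [mul_assoc] using this.symm
    rw [hKbot, Subgroup.mem_bot] at hgK
    exact hgK
  have hcard1 : Nat.card G ≤ Nat.card (Equiv.Perm {p : Equiv.Perm Ω // p ∈ S}) :=
    Nat.card_le_card_of_injective φ hφinj
  have hcard2 : Nat.card (Equiv.Perm {p : Equiv.Perm Ω // p ∈ S}) = Nat.factorial S.card := by
    rw [Nat.card_eq_fintype_card, Fintype.card_perm, Fintype.card_coe]
  calc Nat.card G ≤ Nat.factorial S.card := by rw [← hcard2]; exact hcard1
    _ ≤ Nat.factorial ⌈β / α⌉₊ := Nat.factorial_le hk
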